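/- (Quantum transfer matrix as a dressed inhomogeneous row-to-row monodromy matrix.) For all λ ∈ ℂ for which all sinh-denominators appearing are nonzero, the quantum monodromy matrix satisfies, entrywise as a 2×2 matrix of operators on (ℂ²)^{⊗N}: T^{QTM}(λ) = a(λ) · S · T(λ|ξ₁,…,ξ_N) · S, where a(λ) = b(−β/N−λ)^{N/2}, S = σ^y_N σ^y_{N−2} ··· σ^y_2 (a product of σ^y acting at the even sites, with S² = Id), T(λ|ξ₁,…,ξ_N) = L_N(λ,ξ_N)L_{N−1}(λ,ξ_{N−1})···L_1(λ,ξ_1), and ξ_j = η − β/N for even j, ξ_j = β/N for odd j; the conjugation by S applies to each of the four operator entries. -/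

import Mathlib

/- STATEMENT 15: The quantum monodromy matrix as a dressed inhomogeneous row-to-row monodromy matrix. -/

noncomputable section

open Complex Matrix Filter

/-- `b(λ) = sinh(λ)/sinh(λ+η)`. -/
def bf (η lam : ℂ) : ℂ := Complex.sinh lam / Complex.sinh (lam + η)

/-- `c(λ) = sinh(η)/sinh(λ+η)`. -/
def cf (η lam : ℂ) : ℂ := Complex.sinh η / Complex.sinh (lam + η)

/-- Pauli matrix σʸ. -/
def sigy : Matrix (Fin 2) (Fin 2) ℂ := !![0, -Complex.I; Complex.I, 0]

/-- `e_n^{αβ}`: the elementary 2×2 matrix with entry 1 in row α, column β, at site n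
of (ℂ²)^{⊗N}. -/
def Ee {N : ℕ} (n : Fin N) (α β : Fin 2) :
    Matrix (Fin N → Fin 2) (Fin N → Fin 2) ℂ :=
  Matrix.of fun s s' => if s n = α ∧ s' = Function.update s n β then 1 else 0

/-- A one-site operator acting on the site n of (ℂ²)^{⊗N}. -/
def emb1c {N : ℕ} (n : Fin N) (M : Matrix (Fin 2) (Fin 2) ℂ) :
    Matrix (Fin N → Fin 2) (Fin N → Fin 2) ℂ :=
  Matrix.of fun s s' => M (s n) (s' n) * (if s = Function.update s' n (s n) then 1 else 0)

/-- The XXZ L-matrix `L_n(λ,μ)`, a 2×2 matrix of operators on (ℂ²)^{⊗N}. -/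
def Lmat {N : ℕ} (η : ℂ) (n : Fin N) (lam mu : ℂ) :
    Matrix (Fin 2) (Fin 2) (Matrix (Fin N → Fin 2) (Fin N → Fin 2) ℂ) :=
  !![Ee n 0 0 + bf η (lam - mu) • Ee n 1 1, cf η (lam - mu) • Ee n 1 0;
     cf η (lam - mu) • Ee n 0 1, bf η (lam - mu) • Ee n 0 0 + Ee n 1 1]

/-- The XXZ L-matrix `L̃_n(μ,λ)`. -/
def Ltil {N : ℕ} (η : ℂ) (n : Fin N) (mu lam : ℂ) :
    Matrix (Fin 2) (Fin 2) (Matrix (Fin N → Fin 2) (Fin N → Fin 2) ℂ) :=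
  !![Ee n 0 0 + bf η (mu - lam) • Ee n 1 1, cf η (mu - lam) • Ee n 0 1;
     cf η (mu - lam) • Ee n 1 0, bf η (mu - lam) • Ee n 0 0 + Ee n 1 1]

/-- The quantum monodromy matrix
`T^{QTM}(λ) = L̃_N(−β/N,λ)L_{N−1}(λ,β/N)···L̃_2(−β/N,λ)L_1(λ,β/N)`
(sites are numbered 0,…,N−1 here, so the original site j corresponds to index j−1 and
the even original sites are the odd indices). -/
def Tqtm (η : ℂ) (N : ℕ) (β : ℂ) (lam : ℂ) :
    Matrix (Fin 2) (Fin 2) (Matrix (Fin N → Fin 2) (Fin N → Fin 2) ℂ) :=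
  ((List.ofFn fun j : Fin N =>
    if (j : ℕ) % 2 = 1 then Ltil η j (-β / N) lam else Lmat η j lam (β / N)).reverse).prod

/-- `a(λ) = b(−β/N−λ)^{N/2}`. -/
def aQ (η : ℂ) (N : ℕ) (β : ℂ) (lam : ℂ) : ℂ := bf η (-β / N - lam) ^ (N / 2)

/-- The inhomogeneities: `ξ_j = η − β/N` for even original j (odd index), `ξ_j = β/N`
for odd original j (even index). -/
def xiQ (η : ℂ) (N : ℕ) (β : ℂ) (j : Fin N) : ℂ :=
  if (j : ℕ) % 2 = 1 then η - β / N else β / N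

/-- The inhomogeneous row-to-row monodromy matrix
`T(λ|ξ₁,…,ξ_N) = L_N(λ,ξ_N)···L_1(λ,ξ_1)`. -/
def Trtr (η : ℂ) (N : ℕ) (ξ : Fin N → ℂ) (lam : ℂ) :
    Matrix (Fin 2) (Fin 2) (Matrix (Fin N → Fin 2) (Fin N → Fin 2) ℂ) :=
  ((List.ofFn fun j : Fin N => Lmat η j lam (ξ j)).reverse).prod

/-- `S = σ^y_N σ^y_{N−2} ··· σ^y_2`, the product of σʸ over the even original sites
(odd indices). -/
def SOp (N : ℕ) : Matrix (Fin N → Fin 2) (Fin N → Fin 2) ℂ :=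
  (List.ofFn fun j : Fin N => if (j : ℕ) % 2 = 1 then emb1c j sigy else 1).prod



section AuxQTM

lemma emb1c_one {N : ℕ} (n : Fin N) : emb1c n 1 = 1 := by
  ext s s'
  simp only [emb1c, Matrix.of_apply, Matrix.one_apply]
  by_cases h : s = s'
  · subst h; simp [Function.update_eq_self]
  · by_cases h2 : s n = s' n
    · have : s ≠ Function.update s' n (s n) := by
        intro hc
        apply h; rw [hc, h2, Function.update_eq_self]
      simp [this, h]
    · simp [Matrix.one_apply, h2, h]

lemma emb1c_add {N : ℕ} (n : Fin N) (M M' : Matrix (Fin 2) (Fin 2) ℂ) :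
    emb1c n (M + M') = emb1c n M + emb1c n M' := by
  ext s s'; simp only [emb1c, Matrix.of_apply, Matrix.add_apply, add_mul]

lemma emb1c_smul {N : ℕ} (n : Fin N) (c : ℂ) (M : Matrix (Fin 2) (Fin 2) ℂ) :
    emb1c n (c • M) = c • emb1c n M := by
  ext s s'; simp [emb1c, mul_assoc]

lemma emb1c_neg {N : ℕ} (n : Fin N) (M : Matrix (Fin 2) (Fin 2) ℂ) :
    emb1c n (-M) = -emb1c n M := by
  ext s s'; simp only [emb1c, Matrix.of_apply, Matrix.neg_apply, neg_mul]

lemma Ee_eq {N : ℕ} (n : Fin N) (α β : Fin 2) :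
    Ee n α β = emb1c n (Matrix.single α β 1) := by
  ext s s'
  simp only [Ee, emb1c, Matrix.of_apply, Matrix.single, Matrix.of_apply]
  by_cases h1 : s n = α
  · by_cases h3 : s' n = β
    · by_cases h4 : s = Function.update s' n (s n)
      · have h2 : s' = Function.update s n β := by
          funext k
          by_cases hk : k = n
          · subst hk; simp [h3]
          · rw [Function.update_of_ne hk, h4, Function.update_of_ne hk]
        rw [if_pos ⟨h1, h2⟩, if_pos ⟨h1.symm, h3.symm⟩, if_pos h4, one_mul]
      · have h2 : ¬ s' = Function.update s n β := by
          intro h2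
          apply h4
          funext k
          by_cases hk : k = n
          · subst hk; simp
          · rw [Function.update_of_ne hk, h2, Function.update_of_ne hk]
        rw [if_neg (fun hc => h2 hc.2), if_neg h4, mul_zero]
    · have h2 : ¬ s' = Function.update s n β := by
        intro h2; apply h3; rw [h2]; simp
      rw [if_neg (fun hc => h2 hc.2), if_neg (fun hc => h3 hc.2.symm), zero_mul]
  · rw [if_neg (fun hc => h1 hc.1), if_neg (fun hc => h1 hc.1.symm), zero_mul]

lemma emb1c_mul_same {N : ℕ} (n : Fin N) (M M' : Matrix (Fin 2) (Fin 2) ℂ) :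
    emb1c n M * emb1c n M' = emb1c n (M * M') := by
  ext s s''
  rw [Matrix.mul_apply]
  simp only [emb1c, Matrix.of_apply]
  set F : (Fin N → Fin 2) → ℂ := fun s' =>
    M (s n) (s' n) * (if s = Function.update s' n (s n) then 1 else 0) *
      (M' (s' n) (s'' n) * (if s' = Function.update s'' n (s' n) then 1 else 0)) with hF
  show ∑ s', F s' = _
  by_cases h : s = Function.update s'' n (s n)
  · have hsub : ∀ s' ∈ Finset.univ, s' ∉ Finset.univ.image
        (fun a : Fin 2 => Function.update s'' n a) → F s' = 0 := by
      intro s' _ hs'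
      have d2 : ¬ s' = Function.update s'' n (s' n) := by
        intro hc
        exact hs' (Finset.mem_image.mpr ⟨s' n, Finset.mem_univ _, hc.symm⟩)
      simp [hF, d2]
    rw [← Finset.sum_subset (Finset.subset_univ _) hsub]
    have hinj : ∀ a ∈ Finset.univ, ∀ b ∈ Finset.univ,
        Function.update s'' n a = Function.update s'' n b → a = b := by
      intro a _ b _ hab
      have := congrFun hab n
      simpa using this
    rw [Finset.sum_image hinj]
    have : ∀ a : Fin 2, F (Function.update s'' n a) =
        M (s n) a * M' a (s'' n) := by
      intro a
      have e1 : Function.update s'' n a n = a := by simp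
      have e2 : s = Function.update (Function.update s'' n a) n (s n) := by
        rw [Function.update_idem]; exact h
      have e3 : Function.update s'' n a =
          Function.update s'' n (Function.update s'' n a n) := by simp
      simp only [hF, e1, if_pos e2, if_pos e3]
      norm_num
    rw [Finset.sum_congr rfl (fun a _ => this a)]
    rw [if_pos h, Matrix.mul_apply, Fin.sum_univ_two]
    simp [Fin.sum_univ_two]
  · have : ∀ s' : Fin N → Fin 2, F s' = 0 := by
      intro s'
      by_cases d1 : s = Function.update s' n (s n)
      · by_cases d2 : s' = Function.update s'' n (s' n)
        · exfalso; apply h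
          funext k
          by_cases hk : k = n
          · subst hk; simp
          · rw [Function.update_of_ne hk, d1, Function.update_of_ne hk, d2,
              Function.update_of_ne hk]
        · simp [hF, d2]
      · simp [hF, d1]
    rw [Finset.sum_congr rfl (fun s' _ => this s')]
    simp [h]

lemma emb1c_mul_ne {N : ℕ} {n m : Fin N} (hnm : n ≠ m) (M M' : Matrix (Fin 2) (Fin 2) ℂ) :
    emb1c n M * emb1c m M' = Matrix.of fun s s'' =>
      M (s n) (s'' n) * M' (s m) (s'' m) *
        (if s = Function.update (Function.update s'' n (s n)) m (s m) then 1 else 0) := by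
  ext s s''
  rw [Matrix.mul_apply]
  simp only [emb1c, Matrix.of_apply]
  rw [Finset.sum_eq_single (Function.update s'' m (s m))]
  · have e1 : Function.update s'' m (s m) n = s'' n := Function.update_of_ne hnm _ _
    have e2 : Function.update s'' m (s m) m = s m := by simp
    rw [e1, e2, if_pos rfl, mul_one]
    by_cases h : s = Function.update (Function.update s'' n (s n)) m (s m)
    · have h' : s = Function.update (Function.update s'' m (s m)) n (s n) := by
        rw [← Function.update_comm hnm]; exact h
      rw [if_pos h', if_pos h]; ring
    · have h' : ¬ s = Function.update (Function.update s'' m (s m)) n (s n) := by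
        rw [← Function.update_comm hnm]; exact h
      rw [if_neg h', if_neg h]; ring
  · intro s' _ hs'
    by_cases d1 : s = Function.update s' n (s n)
    · by_cases d2 : s' = Function.update s'' m (s' m)
      · exfalso
        apply hs'
        have hm : s' m = s m := by
          have := congrFun d1 m
          rwa [Function.update_of_ne (fun hc => hnm hc.symm), eq_comm] at this
        rw [d2, hm]
      · rw [if_neg d2, mul_zero, mul_zero]
    · rw [if_neg d1, mul_zero, zero_mul]
  · intro h; exact absurd (Finset.mem_univ _) h

lemma emb1c_commute {N : ℕ} {n m : Fin N} (hnm : n ≠ m) (M M' : Matrix (Fin 2) (Fin 2) ℂ) :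
    Commute (emb1c n M) (emb1c m M') := by
  unfold Commute SemiconjBy
  rw [emb1c_mul_ne hnm, emb1c_mul_ne hnm.symm]
  ext s s''
  simp only [Matrix.of_apply]
  rw [Function.update_comm hnm]
  ring

def Esm (α β : Fin 2) : Matrix (Fin 2) (Fin 2) ℂ := Matrix.single α β 1

lemma sigy_sq : sigy * sigy = 1 := by
  ext i j
  fin_cases i <;> fin_cases j <;>
    simp [sigy, Matrix.mul_apply, Fin.sum_univ_two, Matrix.one_apply, Complex.I_mul_I]

lemma sigy_conj_00 : sigy * Esm 0 0 * sigy = Esm 1 1 := by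
  ext i j
  fin_cases i <;> fin_cases j <;>
    simp [sigy, Esm, Matrix.mul_apply, Fin.sum_univ_two, Matrix.single, Matrix.vecHead, Matrix.vecTail] <;> ring_nf <;>
    simp [Complex.I_sq]

lemma sigy_conj_11 : sigy * Esm 1 1 * sigy = Esm 0 0 := by
  ext i j
  fin_cases i <;> fin_cases j <;>
    simp [sigy, Esm, Matrix.mul_apply, Fin.sum_univ_two, Matrix.single, Matrix.vecHead, Matrix.vecTail] <;> ring_nf <;>
    simp [Complex.I_sq]

lemma sigy_conj_01 : sigy * Esm 0 1 * sigy = -Esm 1 0 := by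
  ext i j
  fin_cases i <;> fin_cases j <;>
    simp [sigy, Esm, Matrix.mul_apply, Fin.sum_univ_two, Matrix.single, Matrix.vecHead, Matrix.vecTail] <;> ring_nf <;>
    simp [Complex.I_sq]

lemma sigy_conj_10 : sigy * Esm 1 0 * sigy = -Esm 0 1 := by
  ext i j
  fin_cases i <;> fin_cases j <;>
    simp [sigy, Esm, Matrix.mul_apply, Fin.sum_univ_two, Matrix.single, Matrix.vecHead, Matrix.vecTail] <;> ring_nf <;>
    simp [Complex.I_sq]

section conj
variable {N : ℕ}

lemma conj_Ee_00 (j : Fin N) : emb1c j sigy * Ee j 0 0 * emb1c j sigy = Ee j 1 1 := by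
  rw [Ee_eq, Ee_eq, emb1c_mul_same, emb1c_mul_same, (show sigy * Matrix.single 0 0 1 * sigy = Matrix.single 1 1 1 from sigy_conj_00)]

lemma conj_Ee_11 (j : Fin N) : emb1c j sigy * Ee j 1 1 * emb1c j sigy = Ee j 0 0 := by
  rw [Ee_eq, Ee_eq, emb1c_mul_same, emb1c_mul_same, (show sigy * Matrix.single 1 1 1 * sigy = Matrix.single 0 0 1 from sigy_conj_11)]

lemma conj_Ee_01 (j : Fin N) : emb1c j sigy * Ee j 0 1 * emb1c j sigy = -Ee j 1 0 := by
  rw [Ee_eq, Ee_eq, emb1c_mul_same, emb1c_mul_same, (show sigy * Matrix.single 0 1 1 * sigy = -Matrix.single 1 0 1 from sigy_conj_01), emb1c_neg]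

lemma conj_Ee_10 (j : Fin N) : emb1c j sigy * Ee j 1 0 * emb1c j sigy = -Ee j 0 1 := by
  rw [Ee_eq, Ee_eq, emb1c_mul_same, emb1c_mul_same, (show sigy * Matrix.single 1 0 1 * sigy = -Matrix.single 0 1 1 from sigy_conj_10), emb1c_neg]

/-- For odd sites: the tilde L-matrix is the conjugated-dressed regular L-matrix. -/
lemma Lodd (η β lam : ℂ) (NN : ℕ) (j : Fin N)
    (k1 : bf η (-β / (NN:ℂ) - lam) * bf η (lam - (η - β / (NN:ℂ))) = 1)
    (k2 : cf η (-β / (NN:ℂ) - lam) = -(bf η (-β / (NN:ℂ) - lam) * cf η (lam - (η - β / (NN:ℂ))))) :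
    Ltil η j (-β / (NN:ℂ)) lam = bf η (-β / (NN:ℂ) - lam) •
      (Matrix.diagonal (fun _ : Fin 2 => emb1c j sigy) * Lmat η j lam (η - β / (NN:ℂ)) *
        Matrix.diagonal (fun _ : Fin 2 => emb1c j sigy)) := by
  rw [← Matrix.ext_iff]
  intro i k
  fin_cases i <;> fin_cases k <;>
    simp only [Ltil, Lmat, Matrix.smul_apply, Matrix.mul_diagonal, Matrix.diagonal_mul,
      Fin.mk_zero, Fin.mk_one, Fin.isValue,
      Matrix.cons_val', Matrix.cons_val_zero, Matrix.cons_val_one, Matrix.head_cons,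
      Matrix.head_fin_const, Matrix.empty_val', Matrix.cons_val_fin_one, Matrix.of_apply]
  · rw [mul_add, add_mul, mul_smul_comm, smul_mul_assoc, conj_Ee_00, conj_Ee_11,
      smul_add, smul_smul, k1, one_smul, add_comm]
  · rw [mul_smul_comm, smul_mul_assoc, conj_Ee_10, smul_neg, smul_neg, smul_smul, k2, neg_smul]
  · rw [mul_smul_comm, smul_mul_assoc, conj_Ee_01, smul_neg, smul_neg, smul_smul, k2, neg_smul]
  · rw [mul_add, add_mul, mul_smul_comm, smul_mul_assoc, conj_Ee_00, conj_Ee_11,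
      smul_add, smul_smul, k1, one_smul, add_comm]

end conj

section lists
variable {R : Type*} [Ring R] {ι : Type*}

lemma prod_map_smul [Algebra ℂ R] (c : ι → ℂ) (A : ι → R) :
    ∀ l : List ι, (l.map fun i => c i • A i).prod = (l.map c).prod • (l.map A).prod
  | [] => by simp
  | i :: t => by
    simp only [List.map_cons, List.prod_cons, prod_map_smul c A t]
    rw [smul_mul_assoc, mul_smul_comm, smul_smul]

lemma telescope (G A : ι → R)
    (hGA : ∀ i j, i ≠ j → Commute (G i) (A j))
    (hGG : ∀ i j, i ≠ j → Commute (G i) (G j)) :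
    ∀ l : List ι, l.Pairwise (· ≠ ·) →
      (l.map fun i => G i * A i * G i).prod =
        (l.map G).prod * (l.map A).prod * (l.map G).prod
  | [], _ => by simp
  | i :: t, hp => by
    have hpt := (List.pairwise_cons.mp hp).2
    have hhd := (List.pairwise_cons.mp hp).1
    simp only [List.map_cons, List.prod_cons, telescope G A hGA hGG t hpt]
    have c1 : Commute (G i) ((t.map G).prod) := by
      apply Commute.list_prod_right
      intro x hx
      obtain ⟨j, hj, rfl⟩ := List.mem_map.mp hx
      exact hGG i j (hhd j hj)
    have c2 : Commute (G i) ((t.map A).prod) := by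
      apply Commute.list_prod_right
      intro x hx
      obtain ⟨j, hj, rfl⟩ := List.mem_map.mp hx
      exact hGA i j (hhd j hj)
    have c3 : Commute (A i) ((t.map G).prod) := by
      apply Commute.list_prod_right
      intro x hx
      obtain ⟨j, hj, rfl⟩ := List.mem_map.mp hx
      exact (hGA j i (fun hc => (hhd j hj) hc.symm)).symm
    simp only [mul_assoc]
    rw [c2.symm.left_comm, c3.symm.left_comm, c1.symm.left_comm]

lemma prod_reverse_of_comm : ∀ l : List R, l.Pairwise Commute → l.reverse.prod = l.prod
  | [], _ => by simp
  | a :: t, hp => by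
    have hpt := (List.pairwise_cons.mp hp).2
    have hhd := (List.pairwise_cons.mp hp).1
    have ca : Commute a t.prod := Commute.list_prod_right _ _ (fun x hx => hhd x hx)
    simp only [List.reverse_cons, List.prod_append, List.prod_cons, List.prod_nil, mul_one,
      prod_reverse_of_comm t hpt]
    rw [ca.eq]

lemma prod_sq_one : ∀ l : List R, (∀ x ∈ l, x * x = 1) → l.Pairwise Commute →
      l.prod * l.prod = 1
  | [], _, _ => by simp
  | a :: t, h1, hp => by
    have hpt := (List.pairwise_cons.mp hp).2
    have hhd := (List.pairwise_cons.mp hp).1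
    have ca : Commute a t.prod := Commute.list_prod_right _ _ (fun x hx => hhd x hx)
    simp only [List.prod_cons]
    calc a * t.prod * (a * t.prod) = a * (t.prod * a) * t.prod := by
          simp only [mul_assoc]
      _ = a * (a * t.prod) * t.prod := by rw [ca.symm.eq]
      _ = (a * a) * (t.prod * t.prod) := by simp only [mul_assoc]
      _ = 1 := by rw [h1 a List.mem_cons_self, prod_sq_one t (fun x hx => h1 x (List.mem_cons_of_mem a hx)) hpt, one_mul]

lemma prod_diag (g : ι → R) :
    ∀ l : List ι, (l.map fun i => (Matrix.diagonal fun _ : Fin 2 => g i)).prod =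
      Matrix.diagonal fun _ : Fin 2 => (l.map g).prod
  | [] => by simp
  | i :: t => by
    simp only [List.map_cons, List.prod_cons, prod_diag g t,
      Matrix.diagonal_mul_diagonal]

end lists

section scal

lemma prod_range_ite_pow (b : ℂ) : ∀ m : ℕ,
    (∏ k ∈ Finset.range m, if k % 2 = 1 then b else 1) = b ^ (m / 2)
  | 0 => by simp
  | m + 1 => by
    rw [Finset.prod_range_succ, prod_range_ite_pow b m]
    by_cases h : m % 2 = 1
    · have : (m + 1) / 2 = m / 2 + 1 := by omega
      rw [if_pos h, this, pow_succ]
    · have : (m + 1) / 2 = m / 2 := by omega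
      rw [if_neg h, this, mul_one]

lemma bf_mul_bf (η x y : ℂ) (hxy : x + y = -η)
    (hx : Complex.sinh (x + η) ≠ 0) (hy : Complex.sinh (y + η) ≠ 0) :
    bf η x * bf η y = 1 := by
  have hy' : y = -(x + η) := by linear_combination hxy
  have hyη : y + η = -x := by rw [hy']; ring
  have hsy : Complex.sinh y = -Complex.sinh (x + η) := by rw [hy', Complex.sinh_neg]
  have hsyη : Complex.sinh (y + η) = -Complex.sinh x := by rw [hyη, Complex.sinh_neg]
  have hsx : Complex.sinh x ≠ 0 := by
    intro hc; apply hy; rw [hsyη, hc, neg_zero]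
  unfold bf
  rw [hsy, hsyη]
  field_simp

lemma cf_eq_neg (η x y : ℂ) (hxy : x + y = -η)
    (hx : Complex.sinh (x + η) ≠ 0) (hy : Complex.sinh (y + η) ≠ 0) :
    cf η x = -(bf η x * cf η y) := by
  have hyη : y + η = -x := by linear_combination hxy
  have hsyη : Complex.sinh (y + η) = -Complex.sinh x := by rw [hyη, Complex.sinh_neg]
  have hsx : Complex.sinh x ≠ 0 := by
    intro hc; apply hy; rw [hsyη, hc, neg_zero]
  unfold bf cf
  rw [hsyη]
  field_simp

end scal





section assemble
/-- The per-site dressing operator. -/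
def gS {N : ℕ} (j : Fin N) : Matrix (Fin N → Fin 2) (Fin N → Fin 2) ℂ :=
  if (j : ℕ) % 2 = 1 then emb1c j sigy else 1

/-- The per-site dressing operator, as a diagonal 2×2 matrix. -/
def GdS {N : ℕ} (j : Fin N) :
    Matrix (Fin 2) (Fin 2) (Matrix (Fin N → Fin 2) (Fin N → Fin 2) ℂ) :=
  Matrix.diagonal fun _ : Fin 2 => gS j

/-- The undressed L-matrix factor. -/
def AS (η : ℂ) {N : ℕ} (β lam : ℂ) (j : Fin N) :
    Matrix (Fin 2) (Fin 2) (Matrix (Fin N → Fin 2) (Fin N → Fin 2) ℂ) :=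
  Lmat η j lam (xiQ η N β j)

/-- The per-site scalar factor. -/
def cS (η : ℂ) (N : ℕ) (β lam : ℂ) (j : Fin N) : ℂ :=
  if (j : ℕ) % 2 = 1 then bf η (-β / N - lam) else 1

variable {N : ℕ}

lemma gS_eq_emb1c (j : Fin N) :
    gS j = emb1c j (if (j : ℕ) % 2 = 1 then sigy else 1) := by
  unfold gS
  by_cases h : (j : ℕ) % 2 = 1
  · rw [if_pos h, if_pos h]
  · rw [if_neg h, if_neg h, emb1c_one]

lemma gS_sq (j : Fin N) : gS j * gS j = 1 := by
  unfold gS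
  by_cases h : (j : ℕ) % 2 = 1
  · rw [if_pos h, emb1c_mul_same, sigy_sq, emb1c_one]
  · rw [if_neg h, one_mul]

lemma gS_commute {j k : Fin N} (hjk : j ≠ k) : Commute (gS j) (gS k) := by
  rw [gS_eq_emb1c, gS_eq_emb1c]
  exact emb1c_commute hjk _ _

lemma commute_diag_Lmat {j k : Fin N} (hjk : j ≠ k) (M : Matrix (Fin 2) (Fin 2) ℂ)
    (η ξ lam : ℂ) :
    Commute (Matrix.diagonal fun _ : Fin 2 => emb1c j M) (Lmat η k lam ξ) := by
  have hE : ∀ α β' : Fin 2, Commute (emb1c j M) (Ee k α β') := by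
    intro α β'
    rw [Ee_eq]
    exact emb1c_commute hjk _ _
  unfold Commute SemiconjBy
  rw [← Matrix.ext_iff]
  intro i i'
  rw [Matrix.diagonal_mul, Matrix.mul_diagonal]
  fin_cases i <;> fin_cases i' <;>
    simp only [Lmat, Fin.mk_zero, Fin.mk_one, Fin.isValue,
      Matrix.cons_val', Matrix.cons_val_zero, Matrix.cons_val_one, Matrix.head_cons,
      Matrix.head_fin_const, Matrix.empty_val', Matrix.cons_val_fin_one, Matrix.of_apply]
  · exact ((hE 0 0).add_right (((hE 1 1)).smul_right _)).eq
  · exact ((hE 1 0).smul_right _).eq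
  · exact ((hE 0 1).smul_right _).eq
  · exact (((hE 0 0).smul_right _).add_right (hE 1 1)).eq

lemma GdS_commute_AS {j k : Fin N} (hjk : j ≠ k) (η β lam : ℂ) :
    Commute (GdS j) (AS η β lam k) := by
  unfold GdS AS
  rw [show (Matrix.diagonal fun _ : Fin 2 => gS j) =
      (Matrix.diagonal fun _ : Fin 2 => emb1c j (if (j : ℕ) % 2 = 1 then sigy else 1)) by
    rw [gS_eq_emb1c]]
  exact commute_diag_Lmat hjk _ η _ lam

lemma GdS_commute {j k : Fin N} (hjk : j ≠ k) : Commute (GdS j) (GdS k) := by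
  unfold Commute SemiconjBy GdS
  rw [Matrix.diagonal_mul_diagonal, Matrix.diagonal_mul_diagonal]
  exact congrArg Matrix.diagonal (funext fun _ => (gS_commute hjk).eq)

theorem qtm_aux (η : ℂ) (hη : Complex.sinh η ≠ 0)
    (N : ℕ) (hN2 : 2 ≤ N) (hNeven : Even N) (β lam : ℂ)
    (h1 : Complex.sinh (lam - β / N + η) ≠ 0)
    (h2 : Complex.sinh (-β / N - lam + η) ≠ 0)
    (h3 : Complex.sinh (lam + β / N) ≠ 0) :
    SOp N * SOp N = 1 ∧
    Tqtm η N β lam =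
      aQ η N β lam •
        (Trtr η N (xiQ η N β) lam).map fun X => SOp N * X * SOp N := by
  have hnodupF : (List.finRange N).Pairwise (· ≠ ·) := List.nodup_finRange N
  have hSfact : SOp N = ((List.finRange N).map gS).prod := by
    unfold SOp
    rw [List.ofFn_eq_map]
    rfl
  have hS2 : SOp N * SOp N = 1 := by
    rw [hSfact]
    apply prod_sq_one
    · intro x hx
      obtain ⟨j, hj, rfl⟩ := List.mem_map.mp hx
      exact gS_sq j
    · exact hnodupF.map gS (fun a b hab => gS_commute hab)
  refine ⟨hS2, ?_⟩
  set l := (List.finRange N).reverse with hl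
  have hlnd : l.Pairwise (· ≠ ·) := by
    rw [hl, List.pairwise_reverse]
    exact hnodupF.imp (fun h => h.symm)
  -- the per-factor identity
  have hfac : (fun j : Fin N =>
      if (j : ℕ) % 2 = 1 then Ltil η j (-β / N) lam else Lmat η j lam (β / N)) =
      fun j => cS η N β lam j • (GdS j * AS η β lam j * GdS j) := by
    funext j
    by_cases hj : (j : ℕ) % 2 = 1
    · have hxi : xiQ η N β j = η - β / N := if_pos hj
      have hg : gS j = emb1c j sigy := if_pos hj
      have hsum : (-β / (N:ℂ) - lam) + (lam - (η - β / (N:ℂ))) = -η := by ring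
      have hden : Complex.sinh ((lam - (η - β / (N:ℂ))) + η) ≠ 0 := by
        rw [show (lam - (η - β / (N:ℂ))) + η = lam + β / (N:ℂ) by ring]
        exact h3
      have k1 := bf_mul_bf η _ _ hsum h2 hden
      have k2 := cf_eq_neg η _ _ hsum h2 hden
      unfold cS GdS AS
      rw [if_pos hj, if_pos hj, hxi, hg]
      exact Lodd η β lam N j k1 k2
    · have hxi : xiQ η N β j = β / N := if_neg hj
      have hg : gS j = 1 := if_neg hj
      unfold cS GdS AS
      rw [if_neg hj, if_neg hj, hxi, hg, Matrix.diagonal_one, one_mul, mul_one, one_smul]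
  -- rewrite Tqtm
  have hTq : Tqtm η N β lam =
      (l.map (cS η N β lam)).prod •
        ((l.map GdS).prod * (l.map (AS η β lam)).prod * (l.map GdS).prod) := by
    unfold Tqtm
    rw [List.ofFn_eq_map, ← List.map_reverse, hfac, ← hl,
      prod_map_smul (cS η N β lam) (fun j => GdS j * AS η β lam j * GdS j) l,
      telescope GdS (AS η β lam)
        (fun i j hij => GdS_commute_AS hij η β lam)
        (fun i j hij => GdS_commute hij) l hlnd]
  rw [hTq]
  -- scalar part
  have hscal : (l.map (cS η N β lam)).prod = aQ η N β lam := by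
    rw [hl, List.map_reverse, List.prod_reverse, ← List.ofFn_eq_map, List.prod_ofFn]
    unfold aQ
    rw [show (∏ j : Fin N, cS η N β lam j) =
        ∏ j : Fin N, (fun k : ℕ => if k % 2 = 1 then bf η (-β / N - lam) else 1) (j : ℕ)
        from rfl,
      Fin.prod_univ_eq_prod_range (fun k : ℕ => if k % 2 = 1 then bf η (-β / N - lam) else 1) N,
      prod_range_ite_pow]
  -- the G product
  have hGprod : (l.map GdS).prod = Matrix.diagonal fun _ : Fin 2 => SOp N := by
    have hgp : (List.map gS l).prod = SOp N := by
      rw [hl, List.map_reverse, prod_reverse_of_comm _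
        (hnodupF.map gS (fun a b hab => gS_commute hab)), hSfact]
    rw [show (l.map GdS) = l.map fun j => Matrix.diagonal fun _ : Fin 2 => gS j from rfl,
      prod_diag gS l, hgp]
  -- the A product
  have hAprod : (l.map (AS η β lam)).prod = Trtr η N (xiQ η N β) lam := by
    unfold Trtr AS
    rw [List.ofFn_eq_map, ← List.map_reverse, hl]
  rw [hscal, hGprod, hAprod]
  congr 1
  rw [← Matrix.ext_iff]
  intro i k
  rw [Matrix.map_apply, Matrix.mul_diagonal, Matrix.diagonal_mul]

end assemble

end AuxQTM

/-- `T^{QTM}(λ) = a(λ)·S·T(λ|ξ₁,…,ξ_N)·S`, with `a(λ) = b(−β/N−λ)^{N/2}`,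
`ξ_j = η−β/N` for even j and `ξ_j = β/N` for odd j, and `S² = Id`; the conjugation by S
applies to each of the four operator entries. -/
theorem qtm_eq_dressed_row_to_row (η : ℂ) (hη : Complex.sinh η ≠ 0)
    (N : ℕ) (hN2 : 2 ≤ N) (hNeven : Even N) (β lam : ℂ)
    (h1 : Complex.sinh (lam - β / N + η) ≠ 0)
    (h2 : Complex.sinh (-β / N - lam + η) ≠ 0)
    (h3 : Complex.sinh (lam + β / N) ≠ 0) :
    SOp N * SOp N = 1 ∧
    Tqtm η N β lam =
      aQ η N β lam •
        (Trtr η N (xiQ η N β) lam).map fun X => SOp N * X * SOp N :=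
  qtm_aux η hη N hN2 hNeven β lam h1 h2 h3

end
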